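/- Let D be a digraph, P a partial decomposition of D, and Q a partial decomposition of D − E(P). Then P ∪ Q is a partial decomposition of D. -/

import Mathlib

open Finset

variable {V : Type*}

/-- Out-degree of a vertex in a digraph. -/
noncomputable def outDeg (D : V → V → Prop) (v : V) : ℕ := Nat.card {u // D v u}

/-- In-degree of a vertex in a digraph. -/
noncomputable def inDeg (D : V → V → Prop) (v : V) : ℕ := Nat.card {u // D u v}

/-- The (signed) excess of a vertex: `d⁺(v) − d⁻(v)`. -/
noncomputable def exInt (D : V → V → Prop) (v : V) : ℤ :=
  (outDeg D v : ℤ) - (inDeg D v : ℤ)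

/-- Positive excess `ex⁺(v) = max{d⁺(v)−d⁻(v),0}`. -/
noncomputable def exPlus (D : V → V → Prop) (v : V) : ℕ := (exInt D v).toNat

/-- Negative excess `ex⁻(v) = max{d⁻(v)−d⁺(v),0}`. -/
noncomputable def exMinus (D : V → V → Prop) (v : V) : ℕ := (-(exInt D v)).toNat

/-- The excess of a digraph: `ex(D) = ∑_v ex⁺(v) = (1/2)∑_v |ex(v)|`. -/
noncomputable def exD [Fintype V] (D : V → V → Prop) : ℕ := ∑ v, exPlus D v

/-- The list of (directed) edges traversed by a path, given as its list of vertices. -/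
def pathEdges (p : List V) : List (V × V) := p.zip p.tail

/-- A directed path of `D` with at least one edge, given by its list of (distinct) vertices. -/
def IsPath (D : V → V → Prop) (p : List V) : Prop :=
  p.Nodup ∧ 2 ≤ p.length ∧ ∀ e ∈ pathEdges p, D e.1 e.2

/-- A path decomposition of `D`: a list of paths whose edge sets partition `E(D)`. -/
def IsPathDecomp (D : V → V → Prop) (Ps : List (List V)) : Prop :=
  (∀ p ∈ Ps, IsPath D p) ∧ ((Ps.map pathEdges).flatten.Nodup) ∧
    ∀ u v : V, D u v ↔ (u, v) ∈ (Ps.map pathEdges).flatten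

/-- Number of paths in `Ps` starting at `v`. -/
def startsAt [DecidableEq V] (Ps : List (List V)) (v : V) : ℕ :=
  Ps.countP (fun p => decide (p.head? = some v))

/-- Number of paths in `Ps` ending at `v`. -/
def endsAt [DecidableEq V] (Ps : List (List V)) (v : V) : ℕ :=
  Ps.countP (fun p => decide (p.getLast? = some v))

/-- A partial decomposition of `D`: edge-disjoint paths of `D` such that at most `ex⁺(v)`
paths start at `v` and at most `ex⁻(v)` paths end at `v`, for each vertex `v`. -/
def IsPartialDecomp [DecidableEq V] (D : V → V → Prop) (Ps : List (List V)) : Prop :=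
  (∀ p ∈ Ps, IsPath D p) ∧ ((Ps.map pathEdges).flatten.Nodup) ∧
    ∀ v : V, startsAt Ps v ≤ exPlus D v ∧ endsAt Ps v ≤ exMinus D v

section Aux
variable [DecidableEq V]

lemma set_card_lemma (A : Set V) (L : List V) (hL : L.Nodup) (hsub : ∀ u ∈ L, u ∈ A) :
    Nat.card A = Nat.card {u // u ∈ A ∧ u ∉ L} + L.length ∨
      (Nat.card A = 0 ∧ Nat.card {u // u ∈ A ∧ u ∉ L} = 0) := by
  have hset : {u | u ∈ A ∧ u ∉ L} = A \ ↑L.toFinset := by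
    ext u; simp [Set.mem_diff]
  have hcard2 : Nat.card {u // u ∈ A ∧ u ∉ L} = (A \ ↑L.toFinset).ncard := by
    rw [← hset, ← Nat.card_coe_set_eq]; rfl
  by_cases hfin : A.Finite
  · left
    rw [Nat.card_coe_set_eq, hcard2]
    have hsub' : ↑L.toFinset ⊆ A := by intro u hu; simp at hu; exact hsub u hu
    have := Set.ncard_diff_add_ncard_of_subset hsub' hfin
    have hlen : (↑L.toFinset : Set V).ncard = L.length := by
      rw [Set.ncard_coe_finset, List.toFinset_card_of_nodup hL]
    omega
  · right
    have hinf : (A \ ↑L.toFinset).Infinite :=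
      Set.Infinite.diff hfin (L.toFinset.finite_toSet)
    rw [Nat.card_coe_set_eq, hcard2, Set.Infinite.ncard hfin, Set.Infinite.ncard hinf]
    exact ⟨rfl, rfl⟩

lemma outDeg_lemma (D : V → V → Prop) (F : List (V × V)) (hN : F.Nodup)
    (hF : ∀ e ∈ F, D e.1 e.2) (v : V) :
    outDeg D v = outDeg (fun u w => D u w ∧ (u, w) ∉ F) v
        + F.countP (fun e => decide (e.1 = v)) ∨
      (outDeg D v = 0 ∧ outDeg (fun u w => D u w ∧ (u, w) ∉ F) v = 0) := by
  set L : List V := (F.filter (fun e => decide (e.1 = v))).map Prod.snd with hLdef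
  have hLnodup : L.Nodup := by
    refine List.Nodup.map_on ?_ (hN.filter _)
    intro e1 h1 e2 h2 hsnd
    simp only [List.mem_filter, decide_eq_true_eq] at h1 h2
    exact Prod.ext (h1.2.trans h2.2.symm) hsnd
  have hmemL : ∀ u, u ∈ L ↔ (v, u) ∈ F := by
    intro u
    simp only [hLdef, List.mem_map, List.mem_filter, decide_eq_true_eq]
    constructor
    · rintro ⟨e, ⟨heF, h1⟩, h2⟩
      have : e = (v, u) := Prod.ext h1 h2
      rwa [← this]
    · intro hvu; exact ⟨(v, u), ⟨hvu, rfl⟩, rfl⟩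
  have hLlen : L.length = F.countP (fun e => decide (e.1 = v)) := by
    rw [hLdef, List.length_map, List.countP_eq_length_filter]
  have hsub : ∀ u ∈ L, u ∈ {u | D v u} := by
    intro u hu
    exact hF (v, u) ((hmemL u).mp hu)
  have hAeq : outDeg D v = Nat.card {u | D v u} := rfl
  have hseteq : {u | u ∈ {u | D v u} ∧ u ∉ L} = {u | D v u ∧ (v, u) ∉ F} := by
    ext u; simp [hmemL u]
  have hA'eq : outDeg (fun u w => D u w ∧ (u, w) ∉ F) v
      = Nat.card {u | u ∈ {u | D v u} ∧ u ∉ L} := by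
    rw [hseteq]; rfl
  rw [hAeq, hA'eq, ← hLlen]
  exact set_card_lemma {u | D v u} L hLnodup hsub

lemma inDeg_lemma (D : V → V → Prop) (F : List (V × V)) (hN : F.Nodup)
    (hF : ∀ e ∈ F, D e.1 e.2) (v : V) :
    inDeg D v = inDeg (fun u w => D u w ∧ (u, w) ∉ F) v
        + F.countP (fun e => decide (e.2 = v)) ∨
      (inDeg D v = 0 ∧ inDeg (fun u w => D u w ∧ (u, w) ∉ F) v = 0) := by
  set L : List V := (F.filter (fun e => decide (e.2 = v))).map Prod.fst with hLdef
  have hLnodup : L.Nodup := by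
    refine List.Nodup.map_on ?_ (hN.filter _)
    intro e1 h1 e2 h2 hfst
    simp only [List.mem_filter, decide_eq_true_eq] at h1 h2
    exact Prod.ext hfst (h1.2.trans h2.2.symm)
  have hmemL : ∀ u, u ∈ L ↔ (u, v) ∈ F := by
    intro u
    simp only [hLdef, List.mem_map, List.mem_filter, decide_eq_true_eq]
    constructor
    · rintro ⟨e, ⟨heF, h1⟩, h2⟩
      have : e = (u, v) := Prod.ext h2 h1
      rwa [← this]
    · intro hvu; exact ⟨(u, v), ⟨hvu, rfl⟩, rfl⟩
  have hLlen : L.length = F.countP (fun e => decide (e.2 = v)) := by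
    rw [hLdef, List.length_map, List.countP_eq_length_filter]
  have hsub : ∀ u ∈ L, u ∈ {u | D u v} := by
    intro u hu
    exact hF (u, v) ((hmemL u).mp hu)
  have hAeq : inDeg D v = Nat.card {u | D u v} := rfl
  have hseteq : {u | u ∈ {u | D u v} ∧ u ∉ L} = {u | D u v ∧ (u, v) ∉ F} := by
    ext u; simp [hmemL u]
  have hA'eq : inDeg (fun u w => D u w ∧ (u, w) ∉ F) v
      = Nat.card {u | u ∈ {u | D u v} ∧ u ∉ L} := by
    rw [hseteq]; rfl
  rw [hAeq, hA'eq, ← hLlen]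
  exact set_card_lemma {u | D u v} L hLnodup hsub

end Aux

section AuxP
variable [DecidableEq V]

lemma countP_fst_pathEdges (v : V) : ∀ p : List V,
    (pathEdges p).countP (fun e => decide (e.1 = v)) = p.dropLast.count v
  | [] => rfl
  | [x] => rfl
  | x :: y :: t => by
    have ih := countP_fst_pathEdges v (y :: t)
    show ((x, y) :: pathEdges (y :: t)).countP _ = ((x :: (y::t).dropLast)).count v
    rw [List.countP_cons, ih, List.count_cons]
    by_cases hx : x = v <;> simp [hx]

lemma countP_snd_pathEdges (v : V) : ∀ p : List V,
    (pathEdges p).countP (fun e => decide (e.2 = v)) = p.tail.count v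
  | [] => rfl
  | [x] => rfl
  | x :: y :: t => by
    have ih := countP_snd_pathEdges v (y :: t)
    show ((x, y) :: pathEdges (y :: t)).countP _ = ((y :: t)).count v
    rw [List.countP_cons, ih, List.count_cons]
    by_cases hy : y = v <;> simp [hy]

lemma path_local (v : V) (p : List V) (h : 2 ≤ p.length) :
    (if p.head? = some v then 1 else 0) ≤ (pathEdges p).countP (fun e => decide (e.1 = v)) ∧
    (if p.getLast? = some v then 1 else 0) ≤ (pathEdges p).countP (fun e => decide (e.2 = v)) ∧
    ((pathEdges p).countP (fun e => decide (e.1 = v)) : ℤ) -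
        (pathEdges p).countP (fun e => decide (e.2 = v)) =
      ((if p.head? = some v then 1 else 0 : ℕ) : ℤ) -
        ((if p.getLast? = some v then 1 else 0 : ℕ) : ℤ) := by
  have hne : p ≠ [] := by rintro rfl; simp at h
  rw [countP_fst_pathEdges, countP_snd_pathEdges]
  have h1 : p.dropLast.count v + (if p.getLast? = some v then 1 else 0) = p.count v := by
    conv_rhs => rw [← List.dropLast_append_getLast hne]
    rw [List.count_append, List.getLast?_eq_getLast hne]
    by_cases hg : p.getLast hne = v <;> simp [hg, List.count_cons]
  have h2 : p.tail.count v + (if p.head? = some v then 1 else 0) = p.count v := by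
    obtain ⟨x, t, rfl⟩ := List.exists_cons_of_ne_nil hne
    rw [List.count_cons]
    by_cases hx : x = v <;> simp [hx]
  refine ⟨?_, ?_, by omega⟩
  · obtain ⟨x, t, rfl⟩ := List.exists_cons_of_ne_nil hne
    have ht : t ≠ [] := by rintro rfl; simp at h
    rw [List.dropLast_cons_of_ne_nil ht, List.count_cons]
    by_cases hx : x = v <;> simp [hx]
  · have hmem : p.getLast hne ∈ p.tail := by
      obtain ⟨x, t, rfl⟩ := List.exists_cons_of_ne_nil hne
      have ht : t ≠ [] := by rintro rfl; simp at h
      rw [List.getLast_cons ht]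
      exact List.getLast_mem ht
    rw [List.getLast?_eq_getLast hne]
    by_cases hg : p.getLast hne = v
    · simp only [hg, if_pos rfl]
      exact List.count_pos_iff.mpr (hg ▸ hmem)
    · simp [hg]

end AuxP

section Aux2
variable [DecidableEq V]

lemma global_count (v : V) : ∀ Ps : List (List V), (∀ p ∈ Ps, 2 ≤ p.length) →
    startsAt Ps v ≤ ((Ps.map pathEdges).flatten).countP (fun e => decide (e.1 = v)) ∧
    endsAt Ps v ≤ ((Ps.map pathEdges).flatten).countP (fun e => decide (e.2 = v)) ∧
    (((Ps.map pathEdges).flatten).countP (fun e => decide (e.1 = v)) : ℤ) -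
        ((Ps.map pathEdges).flatten).countP (fun e => decide (e.2 = v)) =
      (startsAt Ps v : ℤ) - (endsAt Ps v : ℤ)
  | [], _ => by simp [startsAt, endsAt]
  | p :: Ps, h => by
    have ih := global_count v Ps (fun q hq => h q (List.mem_cons_of_mem p hq))
    have hp := path_local v p (h p (List.mem_cons_self))
    simp only [List.map_cons, List.flatten_cons, List.countP_append, startsAt, endsAt,
      List.countP_cons] at *
    push_cast
    by_cases h1 : p.head? = some v <;> by_cases h2 : p.getLast? = some v <;>
      simp only [h1, h2, eq_self_iff_true, decide_true, decide_false, if_true, if_false] at * <;>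
      push_cast at * <;> omega

end Aux2

/-- If `P` is a partial decomposition of `D` and `Q` is a partial
decomposition of `D − E(P)`, then `P ∪ Q` is a partial decomposition of `D`. -/
theorem partial_decomp_union {V : Type*} [DecidableEq V] (D : V → V → Prop)
    (Ps Qs : List (List V)) (hP : IsPartialDecomp D Ps)
    (hQ : IsPartialDecomp (fun u v => D u v ∧ (u, v) ∉ (Ps.map pathEdges).flatten) Qs) :
    IsPartialDecomp D (Ps ++ Qs) := by
  obtain ⟨hP1, hP2, hP3⟩ := hP
  obtain ⟨hQ1, hQ2, hQ3⟩ := hQ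
  set F := (Ps.map pathEdges).flatten with hF
  refine ⟨?_, ?_, ?_⟩
  · intro p hp
    rcases List.mem_append.mp hp with h | h
    · exact hP1 p h
    · obtain ⟨hnd, hlen, hedges⟩ := hQ1 p h
      exact ⟨hnd, hlen, fun e he => (hedges e he).1⟩
  · rw [List.map_append, List.flatten_append]
    refine List.Nodup.append hP2 hQ2 ?_
    intro e heP heQ
    obtain ⟨l, hl, hel⟩ := List.mem_flatten.mp heQ
    obtain ⟨q, hq, rfl⟩ := List.mem_map.mp hl
    exact ((hQ1 q hq).2.2 e hel).2 heP
  · intro v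
    have hlenP : ∀ p ∈ Ps, 2 ≤ p.length := fun p hp => (hP1 p hp).2.1
    have hFE : ∀ e ∈ F, D e.1 e.2 := by
      intro e he
      obtain ⟨l, hl, hel⟩ := List.mem_flatten.mp he
      obtain ⟨p, hp, rfl⟩ := List.mem_map.mp hl
      exact (hP1 p hp).2.2 e hel
    have hout := outDeg_lemma D F hP2 hFE v
    have hin := inDeg_lemma D F hP2 hFE v
    have hg := global_count v Ps hlenP
    rw [← hF] at hg
    have h3 := hP3 v
    have h4 := hQ3 v
    have hstart : startsAt (Ps ++ Qs) v = startsAt Ps v + startsAt Qs v := by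
      simp [startsAt, List.countP_append]
    have hend : endsAt (Ps ++ Qs) v = endsAt Ps v + endsAt Qs v := by
      simp [endsAt, List.countP_append]
    rw [hstart, hend]
    simp only [exPlus, exMinus, exInt] at *
    omega
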